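/- In ℂ^n × ℂ with coordinates (z, w), let M = {(z,w) : Im w = 0, ‖z‖² + (Re w)² = 1}. Then M is a compact real analytic submanifold of real codimension 2, whose CR singular points are exactly the two points (0, 1) and (0, −1); moreover H = {(z,w) : Im w = 0, ‖z‖² + (Re w)² ≤ 1} is a compact Levi-flat real analytic hypersurface with boundary with ∂H = M. -/

import Mathlib

open Set Topology

noncomputable section

variable {E : Type*} [NormedAddCommGroup E] [NormedSpace ℝ E]

/-- `Y` is, near `p`, a `d`-dimensional submanifold of class `C^n`, in the sense that some
local `C^n` diffeomorphism of the ambient space flattens `Y` onto a `d`-dimensional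
linear subspace. -/
def SmoothSubmanifoldAt (n : ℕ∞) (d : ℕ) (Y : Set E) (p : E) : Prop :=
  ∃ U V : Set E, IsOpen U ∧ p ∈ U ∧ IsOpen V ∧
    ∃ φ ψ : E → E, ContDiffOn ℝ n φ U ∧ ContDiffOn ℝ n ψ V ∧
      (∀ x ∈ U, φ x ∈ V ∧ ψ (φ x) = x) ∧ (∀ y ∈ V, ψ y ∈ U ∧ φ (ψ y) = y) ∧
      ∃ F : Submodule ℝ E, Module.finrank ℝ F = d ∧ φ '' (Y ∩ U) = V ∩ (F : Set E)

/-- `Y` is an embedded `C^n` submanifold of dimension `d`. -/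
def IsSmoothSubmanifold (n : ℕ∞) (d : ℕ) (Y : Set E) : Prop :=
  ∀ p ∈ Y, SmoothSubmanifoldAt n d Y p

/-- `Y` is, near `p`, a real analytic `d`-dimensional submanifold. -/
def AnalyticSubmanifoldAt (d : ℕ) (Y : Set E) (p : E) : Prop :=
  ∃ U V : Set E, IsOpen U ∧ p ∈ U ∧ IsOpen V ∧
    ∃ φ ψ : E → E, (∀ x ∈ U, AnalyticAt ℝ φ x) ∧ (∀ y ∈ V, AnalyticAt ℝ ψ y) ∧
      (∀ x ∈ U, φ x ∈ V ∧ ψ (φ x) = x) ∧ (∀ y ∈ V, ψ y ∈ U ∧ φ (ψ y) = y) ∧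
      ∃ F : Submodule ℝ E, Module.finrank ℝ F = d ∧ φ '' (Y ∩ U) = V ∩ (F : Set E)

/-- `Y` is an embedded real analytic submanifold of dimension `d`. -/
def IsAnalyticSubmanifold (d : ℕ) (Y : Set E) : Prop :=
  ∀ p ∈ Y, AnalyticSubmanifoldAt d Y p

/-- `Y` is, near `p`, a `C^n` submanifold with boundary `bd`:  a local ambient `C^n`
diffeomorphism flattens `Y` onto a relatively open piece of a closed half-space of a
`d`-dimensional subspace, with `bd` going to the bounding hyperplane. -/
def SmoothSubmanifoldWithBoundaryAt (n : ℕ∞) (d : ℕ) (Y bd : Set E) (p : E) : Prop :=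
  ∃ U V : Set E, IsOpen U ∧ p ∈ U ∧ IsOpen V ∧
    ∃ φ ψ : E → E, ContDiffOn ℝ n φ U ∧ ContDiffOn ℝ n ψ V ∧
      (∀ x ∈ U, φ x ∈ V ∧ ψ (φ x) = x) ∧ (∀ y ∈ V, ψ y ∈ U ∧ φ (ψ y) = y) ∧
      ∃ F : Submodule ℝ E, Module.finrank ℝ F = d ∧
        ∃ ℓ : E →ₗ[ℝ] ℝ, (∃ x ∈ F, ℓ x ≠ 0) ∧
          φ '' (Y ∩ U) = {y ∈ V ∩ (F : Set E) | 0 ≤ ℓ y} ∧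
          φ '' (bd ∩ U) = {y ∈ V ∩ (F : Set E) | ℓ y = 0}

/-- `Y` is a compact-type `C^n` submanifold with boundary `bd` (boundary included in `Y`). -/
def IsSmoothSubmanifoldWithBoundary (n : ℕ∞) (d : ℕ) (Y bd : Set E) : Prop :=
  bd ⊆ Y ∧ ∀ p ∈ Y, SmoothSubmanifoldWithBoundaryAt n d Y bd p

/-- `V` is a real analytic subvariety of the open set `U`: near every point of `U` it is
the common zero set of a family of real analytic functions. -/
def IsAnalyticVarietyIn (U V : Set E) : Prop :=
  V ⊆ U ∧ ∀ p ∈ U, ∃ W, IsOpen W ∧ p ∈ W ∧ W ⊆ U ∧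
    ∃ (ι : Type) (f : ι → E → ℝ), (∀ i, ∀ x ∈ W, AnalyticAt ℝ (f i) x) ∧
      V ∩ W = {x ∈ W | ∀ i, f i x = 0}

/-- `p` is a manifold point of `V` of dimension `d`: near `p`, `V` is a real analytic
submanifold of dimension `d`. -/
def IsManifoldPointOfDim (V : Set E) (p : E) (d : ℕ) : Prop :=
  ∃ W, IsOpen W ∧ p ∈ W ∧ IsAnalyticSubmanifold d (V ∩ W) ∧ p ∈ V

/-- The dimensions of all (analytic) manifold points of `V` are at most `d`. -/
def HasDimAtMost (V : Set E) (d : ℕ) : Prop :=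
  ∀ p ∈ V, ∀ d', IsManifoldPointOfDim V p d' → d' ≤ d

/-- `V` has dimension exactly `d`: the maximum of the dimensions of its manifold points
is `d`. -/
def HasDim (V : Set E) (d : ℕ) : Prop :=
  HasDimAtMost V d ∧ ∃ p ∈ V, IsManifoldPointOfDim V p d

/-- Semianalytic subsets of the open set `W`: generated from `{f > 0}`, `f` real analytic
on `W`, by finite unions, intersections and complements (within `W`). -/
inductive SemianalyticIn (W : Set E) : Set E → Prop
  | pos (f : E → ℝ) (hf : ∀ x ∈ W, AnalyticAt ℝ f x) : SemianalyticIn W {x ∈ W | 0 < f x}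
  | union {A B : Set E} : SemianalyticIn W A → SemianalyticIn W B → SemianalyticIn W (A ∪ B)
  | inter {A B : Set E} : SemianalyticIn W A → SemianalyticIn W B → SemianalyticIn W (A ∩ B)
  | compl {A : Set E} : SemianalyticIn W A → SemianalyticIn W (W \ A)

/-- A semianalytic subset of `ℝ^N`. -/
def Semianalytic (S : Set E) : Prop :=
  ∀ p : E, ∃ W, IsOpen W ∧ p ∈ W ∧ SemianalyticIn W (S ∩ W)

/-- A subanalytic subset of `ℝ^N`: locally the image under the coordinate projection of a
relatively compact semianalytic set. -/
def Subanalytic {N : ℕ} (S : Set (Fin N → ℝ)) : Prop :=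
  ∀ p : Fin N → ℝ, ∃ W, IsOpen W ∧ p ∈ W ∧
    ∃ (M : ℕ) (A : Set (Fin (N + M) → ℝ)), Semianalytic A ∧ IsCompact (closure A) ∧
      S ∩ W = (fun (x : Fin (N + M) → ℝ) (i : Fin N) => x (Fin.castAdd M i)) '' A


section ComplexPart

variable {F : Type*} [NormedAddCommGroup F] [NormedSpace ℂ F]

/-- The Wirtinger derivative of `g` at `p` in the complex direction `v`. -/
def wdir (g : F → ℂ) (v p : F) : ℂ :=
  (fderiv ℝ g p v - Complex.I * fderiv ℝ g p (Complex.I • v)) / 2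

/-- The conjugate Wirtinger derivative of `g` at `p` in the complex direction `v`. -/
def wdirBar (g : F → ℂ) (v p : F) : ℂ :=
  (fderiv ℝ g p v + Complex.I * fderiv ℝ g p (Complex.I • v)) / 2

/-- The set of tangent vectors to the set `M` at `p`: velocities of curves in `M`. -/
def TangentSet (M : Set F) (p : F) : Set F :=
  {v | ∃ γ : ℝ → F, γ 0 = p ∧ HasDerivAt γ v 0 ∧ ∀ᶠ t in nhds (0 : ℝ), γ t ∈ M}

/-- The complex tangent set `T^c_p M = J(T_p M) ∩ T_p M`. -/
def complexTangent (M : Set F) (p : F) : Set F :=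
  {v | v ∈ TangentSet M p ∧ Complex.I • v ∈ TangentSet M p}

/-- The real dimension of the complex tangent space of `M` at `p`. -/
def CRDimAt (M : Set F) (p : F) : ℕ :=
  Module.finrank ℝ (Submodule.span ℝ (complexTangent M p))

/-- `M` is CR near `p`: the dimension of the complex tangent space is locally constant. -/
def IsCRNear (M : Set F) (p : F) : Prop :=
  ∃ W ∈ nhds p, ∃ m, ∀ q ∈ M ∩ W, CRDimAt M q = m

/-- The set of CR singular points of `M`. -/
def crSingularSet (M : Set F) : Set F := {p ∈ M | ¬ IsCRNear M p}

/-- The hypersurface `A` is Levi-flat near `p`: some local `C²` defining function `ρ`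
with nonvanishing differential has Levi form vanishing on complex tangent directions. -/
def LeviFlatAt (A : Set F) (p : F) : Prop :=
  ∃ U, IsOpen U ∧ p ∈ U ∧ ∃ ρ : F → ℝ, ContDiffOn ℝ 2 ρ U ∧
    (∀ x ∈ U, fderiv ℝ ρ x ≠ 0) ∧ A ∩ U = {x ∈ U | ρ x = 0} ∧
    ∀ x ∈ A ∩ U, ∀ w : F, wdir (fun q => (ρ q : ℂ)) w x = 0 →
      wdirBar (fun q => wdir (fun y => (ρ y : ℂ)) w q) w x = 0

/-- The hypersurface `A` is Levi-flat. -/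
def IsLeviFlat (A : Set F) : Prop := ∀ p ∈ A, LeviFlatAt A p

end ComplexPart



section Example

variable {F : Type*} [NormedAddCommGroup F] [NormedSpace ℝ F]

/-- Real analytic version of the flattening with boundary:  `Y` is, near `p`, a real
analytic `d`-dimensional submanifold with boundary `bd`. -/
def AnalyticSubmanifoldWithBoundaryAt (d : ℕ) (Y bd : Set F) (p : F) : Prop :=
  ∃ U V : Set F, IsOpen U ∧ p ∈ U ∧ IsOpen V ∧
    ∃ φ ψ : F → F, (∀ x ∈ U, AnalyticAt ℝ φ x) ∧ (∀ y ∈ V, AnalyticAt ℝ ψ y) ∧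
      (∀ x ∈ U, φ x ∈ V ∧ ψ (φ x) = x) ∧ (∀ y ∈ V, ψ y ∈ U ∧ φ (ψ y) = y) ∧
      ∃ G : Submodule ℝ F, Module.finrank ℝ G = d ∧
        ∃ ℓ : F →ₗ[ℝ] ℝ, (∃ x ∈ G, ℓ x ≠ 0) ∧
          φ '' (Y ∩ U) = {y ∈ V ∩ (G : Set F) | 0 ≤ ℓ y} ∧
          φ '' (bd ∩ U) = {y ∈ V ∩ (G : Set F) | ℓ y = 0}

/-- `Y` is a real analytic submanifold with boundary `bd`. -/
def IsAnalyticSubmanifoldWithBoundary (d : ℕ) (Y bd : Set F) : Prop :=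
  bd ⊆ Y ∧ ∀ p ∈ Y, AnalyticSubmanifoldWithBoundaryAt d Y bd p

namespace ModelAux
variable {n : ℕ}

/-- The standard real inner product on `ℂⁿ × ℂ`. -/
def Bf (x y : (Fin n → ℂ) × ℂ) : ℝ :=
  (∑ j, ((x.1 j).re * (y.1 j).re + (x.1 j).im * (y.1 j).im)) +
    (x.2.re * y.2.re + x.2.im * y.2.im)

lemma norm_sq_c (z : ℂ) : ‖z‖ ^ 2 = z.re * z.re + z.im * z.im := by
  rw [Complex.sq_norm, Complex.normSq_apply]

lemma Bf_symm (x y : (Fin n → ℂ) × ℂ) : Bf x y = Bf y x := by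
  unfold Bf; congr 1; · exact Finset.sum_congr rfl fun j _ => by ring
  · ring

lemma Bf_add_left (x x' y : (Fin n → ℂ) × ℂ) : Bf (x + x') y = Bf x y + Bf x' y := by
  unfold Bf
  simp only [Prod.fst_add, Prod.snd_add, Pi.add_apply, Complex.add_re, Complex.add_im]
  rw [show (∑ j, (((x.1 j).re + (x'.1 j).re) * (y.1 j).re + ((x.1 j).im + (x'.1 j).im) * (y.1 j).im))
      = ∑ j, ((((x.1 j).re * (y.1 j).re + (x.1 j).im * (y.1 j).im)) + (((x'.1 j).re * (y.1 j).re + (x'.1 j).im * (y.1 j).im)))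
      from Finset.sum_congr rfl fun j _ => by ring, Finset.sum_add_distrib]
  ring

lemma Bf_smul_left (c : ℝ) (x y : (Fin n → ℂ) × ℂ) : Bf (c • x) y = c * Bf x y := by
  unfold Bf
  simp only [Prod.smul_fst, Prod.smul_snd, Pi.smul_apply, Complex.smul_re, Complex.smul_im, smul_eq_mul]
  rw [show (∑ j, ((c * (x.1 j).re) * (y.1 j).re + (c * (x.1 j).im) * (y.1 j).im))
      = ∑ j, (c * ((x.1 j).re * (y.1 j).re + (x.1 j).im * (y.1 j).im))
      from Finset.sum_congr rfl fun j _ => by ring, ← Finset.mul_sum]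
  ring

lemma Bf_self_eq (x : (Fin n → ℂ) × ℂ) :
    Bf x x = (∑ j, ‖x.1 j‖ ^ 2) + (x.2.re ^ 2 + x.2.im ^ 2) := by
  unfold Bf
  congr 1
  · exact Finset.sum_congr rfl fun j _ => by rw [norm_sq_c]
  · ring

lemma Bf_self_nonneg (x : (Fin n → ℂ) × ℂ) : 0 ≤ Bf x x := by
  rw [Bf_self_eq]
  have : ∀ j ∈ Finset.univ, (0:ℝ) ≤ ‖x.1 j‖ ^ 2 := fun j _ => sq_nonneg _
  positivity

lemma Bf_self_pos {x : (Fin n → ℂ) × ℂ} (hx : x ≠ 0) : 0 < Bf x x := by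
  rcases (Bf_self_nonneg x).lt_or_eq with h | h
  · exact h
  · exfalso; apply hx
    have h' := h.symm
    rw [Bf_self_eq] at h'
    have hsum : (∑ j, ‖x.1 j‖ ^ 2) = 0 ∧ x.2.re ^ 2 + x.2.im ^ 2 = 0 := by
      constructor <;> nlinarith [Finset.sum_nonneg (fun j (_ : j ∈ Finset.univ) => sq_nonneg ‖x.1 j‖), sq_nonneg x.2.re, sq_nonneg x.2.im]
    have h1 : ∀ j, x.1 j = 0 := by
      intro j
      have := (Finset.sum_eq_zero_iff_of_nonneg (fun j _ => sq_nonneg ‖x.1 j‖)).1 hsum.1 j (Finset.mem_univ j)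
      have : ‖x.1 j‖ = 0 := by nlinarith [norm_nonneg (x.1 j)]
      exact norm_eq_zero.1 this
    have h2 : x.2 = 0 := by
      have hre : x.2.re = 0 := by nlinarith [sq_nonneg x.2.re, sq_nonneg x.2.im, hsum.2]
      have him : x.2.im = 0 := by nlinarith [sq_nonneg x.2.re, sq_nonneg x.2.im, hsum.2]
      exact Complex.ext hre him
    exact Prod.ext (funext h1) h2

lemma Bf_neg_left (x y : (Fin n → ℂ) × ℂ) : Bf (-x) y = - Bf x y := by
  have := Bf_smul_left (-1) x y; simpa using this

lemma Bf_sub_left (x x' y : (Fin n → ℂ) × ℂ) : Bf (x - x') y = Bf x y - Bf x' y := by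
  rw [sub_eq_add_neg, Bf_add_left, Bf_neg_left, sub_eq_add_neg]

lemma Bf_add_right (x y y' : (Fin n → ℂ) × ℂ) : Bf x (y + y') = Bf x y + Bf x y' := by
  rw [Bf_symm, Bf_add_left, Bf_symm y, Bf_symm y']

lemma Bf_smul_right (c : ℝ) (x y : (Fin n → ℂ) × ℂ) : Bf x (c • y) = c * Bf x y := by
  rw [Bf_symm, Bf_smul_left, Bf_symm]

/-- `Bf · v` as a linear map. -/
def BfLM (v : (Fin n → ℂ) × ℂ) : ((Fin n → ℂ) × ℂ) →ₗ[ℝ] ℝ where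
  toFun x := Bf x v
  map_add' x y := Bf_add_left x y v
  map_smul' c x := Bf_smul_left c x v

/-- `Bf · v` as a continuous linear map. -/
def BfL (v : (Fin n → ℂ) × ℂ) : ((Fin n → ℂ) × ℂ) →L[ℝ] ℝ :=
  LinearMap.toContinuousLinearMap (BfLM v)

@[simp] lemma BfL_apply (v x : (Fin n → ℂ) × ℂ) : BfL v x = Bf x v := rfl

lemma Bf_bound (x y : (Fin n → ℂ) × ℂ) : |Bf x y| ≤ (2 * n + 2) * (‖x‖ * ‖y‖) := by
  have key : ∀ (u w : (Fin n → ℂ) × ℂ), ∀ j, |(u.1 j).re * (w.1 j).re + (u.1 j).im * (w.1 j).im| ≤ 2 * (‖u‖ * ‖w‖) := by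
    intro u w j
    have h1 : |(u.1 j).re| ≤ ‖u‖ := by
      calc |(u.1 j).re| ≤ ‖u.1 j‖ := Complex.abs_re_le_norm _
        _ ≤ ‖u.1‖ := norm_le_pi_norm u.1 j
        _ ≤ ‖u‖ := norm_fst_le u
    have h2 : |(u.1 j).im| ≤ ‖u‖ := by
      calc |(u.1 j).im| ≤ ‖u.1 j‖ := Complex.abs_im_le_norm _
        _ ≤ ‖u.1‖ := norm_le_pi_norm u.1 j
        _ ≤ ‖u‖ := norm_fst_le u
    have h3 : |(w.1 j).re| ≤ ‖w‖ := by
      calc |(w.1 j).re| ≤ ‖w.1 j‖ := Complex.abs_re_le_norm _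
        _ ≤ ‖w.1‖ := norm_le_pi_norm w.1 j
        _ ≤ ‖w‖ := norm_fst_le w
    have h4 : |(w.1 j).im| ≤ ‖w‖ := by
      calc |(w.1 j).im| ≤ ‖w.1 j‖ := Complex.abs_im_le_norm _
        _ ≤ ‖w.1‖ := norm_le_pi_norm w.1 j
        _ ≤ ‖w‖ := norm_fst_le w
    calc |(u.1 j).re * (w.1 j).re + (u.1 j).im * (w.1 j).im|
        ≤ |(u.1 j).re * (w.1 j).re| + |(u.1 j).im * (w.1 j).im| := abs_add_le _ _
      _ = |(u.1 j).re| * |(w.1 j).re| + |(u.1 j).im| * |(w.1 j).im| := by rw [abs_mul, abs_mul]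
      _ ≤ ‖u‖ * ‖w‖ + ‖u‖ * ‖w‖ := by
          gcongr <;> first | exact abs_nonneg _ | assumption
      _ = 2 * (‖u‖ * ‖w‖) := by ring
  have h2 : |x.2.re * y.2.re + x.2.im * y.2.im| ≤ 2 * (‖x‖ * ‖y‖) := by
    have h1 : |x.2.re| ≤ ‖x‖ := le_trans (Complex.abs_re_le_norm _) (norm_snd_le x)
    have h2 : |x.2.im| ≤ ‖x‖ := le_trans (Complex.abs_im_le_norm _) (norm_snd_le x)
    have h3 : |y.2.re| ≤ ‖y‖ := le_trans (Complex.abs_re_le_norm _) (norm_snd_le y)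
    have h4 : |y.2.im| ≤ ‖y‖ := le_trans (Complex.abs_im_le_norm _) (norm_snd_le y)
    calc |x.2.re * y.2.re + x.2.im * y.2.im|
        ≤ |x.2.re| * |y.2.re| + |x.2.im| * |y.2.im| := (abs_add_le _ _).trans (by rw [abs_mul, abs_mul])
      _ ≤ ‖x‖ * ‖y‖ + ‖x‖ * ‖y‖ := by gcongr <;> first | exact abs_nonneg _ | assumption
      _ = 2 * (‖x‖ * ‖y‖) := by ring
  have hsum : |∑ j, ((x.1 j).re * (y.1 j).re + (x.1 j).im * (y.1 j).im)| ≤ n * (2 * (‖x‖ * ‖y‖)) := by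
    calc |∑ j, ((x.1 j).re * (y.1 j).re + (x.1 j).im * (y.1 j).im)|
        ≤ ∑ j, |(x.1 j).re * (y.1 j).re + (x.1 j).im * (y.1 j).im| := Finset.abs_sum_le_sum_abs _ _
      _ ≤ ∑ _j : Fin n, 2 * (‖x‖ * ‖y‖) := Finset.sum_le_sum fun j _ => key x y j
      _ = n * (2 * (‖x‖ * ‖y‖)) := by rw [Finset.sum_const, Finset.card_univ, Fintype.card_fin, nsmul_eq_mul]
  calc |Bf x y| ≤ |∑ j, ((x.1 j).re * (y.1 j).re + (x.1 j).im * (y.1 j).im)| + |x.2.re * y.2.re + x.2.im * y.2.im| := abs_add_le _ _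
    _ ≤ n * (2 * (‖x‖ * ‖y‖)) + 2 * (‖x‖ * ‖y‖) := add_le_add hsum h2
    _ = (2 * n + 2) * (‖x‖ * ‖y‖) := by ring

/-- Derivative of the quadratic form `x ↦ Bf x x`. -/
lemma hasFDerivAt_Bf_self (p : (Fin n → ℂ) × ℂ) :
    HasFDerivAt (fun x => Bf x x) ((2:ℝ) • BfL p) p := by
  rw [hasFDerivAt_iff_isLittleO_nhds_zero]
  have heq : ∀ h : (Fin n → ℂ) × ℂ,
      Bf (p + h) (p + h) - Bf p p - ((2:ℝ) • BfL p) h = Bf h h := by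
    intro h
    simp only [ContinuousLinearMap.coe_smul', Pi.smul_apply, BfL_apply, smul_eq_mul]
    rw [Bf_add_left, Bf_add_right, Bf_add_right, Bf_symm h p]
    ring
  simp only [heq]
  rw [Asymptotics.isLittleO_iff]
  intro c hc
  have : ∀ᶠ h : (Fin n → ℂ) × ℂ in nhds 0, ‖h‖ < c / (2 * n + 2) := by
    apply Metric.eventually_nhds_iff.2
    refine ⟨c / (2 * n + 2), by positivity, fun {h} hh => ?_⟩
    simpa using hh
  filter_upwards [this] with h hh
  have hb := Bf_bound h h
  have hn : (0:ℝ) ≤ ‖h‖ := norm_nonneg _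
  calc ‖Bf h h‖ = |Bf h h| := rfl
    _ ≤ (2 * n + 2) * (‖h‖ * ‖h‖) := hb
    _ ≤ (2 * n + 2) * ((c / (2 * n + 2)) * ‖h‖) := by gcongr
    _ = c * ‖h‖ := by field_simp
  
lemma continuous_Bf_self : Continuous (fun x : (Fin n → ℂ) × ℂ => Bf x x) := by
  unfold Bf
  have hc : ∀ j : Fin n, Continuous (fun x : (Fin n → ℂ) × ℂ => x.1 j) :=
    fun j => (continuous_apply j).comp continuous_fst
  apply Continuous.add
  · exact continuous_finset_sum _ fun j _ => ((Complex.continuous_re.comp (hc j)).mul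
      (Complex.continuous_re.comp (hc j))).add ((Complex.continuous_im.comp (hc j)).mul
      (Complex.continuous_im.comp (hc j)))
  · exact ((Complex.continuous_re.comp continuous_snd).mul
      (Complex.continuous_re.comp continuous_snd)).add
      ((Complex.continuous_im.comp continuous_snd).mul
      (Complex.continuous_im.comp continuous_snd))


/-- The model manifold. -/
def Mset (n : ℕ) : Set ((Fin n → ℂ) × ℂ) :=
  {p | p.2.im = 0 ∧ (∑ j, ‖p.1 j‖ ^ 2) + p.2.re ^ 2 = 1}

/-- The model hypersurface. -/
def Hset (n : ℕ) : Set ((Fin n → ℂ) × ℂ) :=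
  {p | p.2.im = 0 ∧ (∑ j, ‖p.1 j‖ ^ 2) + p.2.re ^ 2 ≤ 1}

lemma mem_Mset {p : (Fin n → ℂ) × ℂ} : p ∈ Mset n ↔ p.2.im = 0 ∧ Bf p p = 1 := by
  unfold Mset
  constructor
  · rintro ⟨h1, h2⟩
    refine ⟨h1, ?_⟩
    rw [Bf_self_eq, h1]
    simpa using h2
  · rintro ⟨h1, h2⟩
    refine ⟨h1, ?_⟩
    rw [Bf_self_eq, h1] at h2
    simpa using h2

lemma mem_Hset {p : (Fin n → ℂ) × ℂ} : p ∈ Hset n ↔ p.2.im = 0 ∧ Bf p p ≤ 1 := by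
  unfold Hset
  constructor
  · rintro ⟨h1, h2⟩
    refine ⟨h1, ?_⟩
    rw [Bf_self_eq, h1]
    simpa using h2
  · rintro ⟨h1, h2⟩
    refine ⟨h1, ?_⟩
    rw [Bf_self_eq, h1] at h2
    simpa using h2

lemma tangentSet_subset {p v : (Fin n → ℂ) × ℂ}
    (hv : v ∈ TangentSet (Mset n) p) : v.2.im = 0 ∧ Bf p v = 0 := by
  obtain ⟨γ, hγ0, hγd, hγM⟩ := hv
  have him : HasDerivAt (fun t => (γ t).2.im) v.2.im 0 := by
    have := (Complex.imCLM.comp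
      (ContinuousLinearMap.snd ℝ (Fin n → ℂ) ℂ)).hasFDerivAt.comp_hasDerivAt 0 hγd
    exact this
  have himc : HasDerivAt (fun t : ℝ => (γ t).2.im) 0 0 := by
    apply HasDerivAt.congr_of_eventuallyEq (hasDerivAt_const 0 (0:ℝ))
    filter_upwards [hγM] with t ht
    exact (mem_Mset.1 ht).1
  have h1 : v.2.im = 0 := him.unique himc
  have hQ : HasDerivAt (fun t => Bf (γ t) (γ t)) (2 * Bf p v) 0 := by
    have h := (hasFDerivAt_Bf_self (p := γ 0)).comp_hasDerivAt 0 hγd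
    have : (((2:ℝ) • BfL (γ 0)) : _ →L[ℝ] ℝ) v = 2 * Bf p v := by
      simp [hγ0, Bf_symm]
    rw [← this]
    exact h
  have hQc : HasDerivAt (fun t => Bf (γ t) (γ t)) 0 0 := by
    apply HasDerivAt.congr_of_eventuallyEq (hasDerivAt_const 0 (1:ℝ))
    filter_upwards [hγM] with t ht
    exact (mem_Mset.1 ht).2
  have h2 : 2 * Bf p v = 0 := hQ.unique hQc
  exact ⟨h1, by linarith⟩

lemma tangent_mem {p v : (Fin n → ℂ) × ℂ} (hp : p ∈ Mset n)
    (h1 : v.2.im = 0) (h2 : Bf p v = 0) : v ∈ TangentSet (Mset n) p := by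
  obtain ⟨hpim, hpQ⟩ := mem_Mset.1 hp
  set a := Bf v v with ha
  have ha0 : 0 ≤ a := Bf_self_nonneg v
  have hupos : ∀ t : ℝ, (0:ℝ) < 1 + t ^ 2 * a := by
    intro t
    nlinarith [sq_nonneg t, mul_nonneg (sq_nonneg t) ha0]
  refine ⟨fun t => (Real.sqrt (1 + t ^ 2 * a))⁻¹ • (p + t • v), ?_, ?_, ?_⟩
  · simp
  · have hu : HasDerivAt (fun t : ℝ => 1 + t ^ 2 * a) 0 0 := by
      have h := ((hasDerivAt_pow 2 (0:ℝ)).mul_const a).const_add 1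
      simpa using h
    have hs : HasDerivAt (fun t : ℝ => Real.sqrt (1 + t ^ 2 * a)) 0 0 := by
      have hsq : HasDerivAt Real.sqrt (1 / (2 * Real.sqrt 1)) 1 := Real.hasDerivAt_sqrt one_ne_zero
      have h := HasDerivAt.comp (0:ℝ) (by simpa using hsq) hu
      exact h.congr_deriv (by simp)
    have hinv : HasDerivAt (fun t : ℝ => (Real.sqrt (1 + t ^ 2 * a))⁻¹) 0 0 := by
      have h := hs.inv (by simp)
      exact h.congr_deriv (by simp)
    have hlin : HasDerivAt (fun t : ℝ => p + t • v) v 0 := by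
      have h := ((hasDerivAt_id (0:ℝ)).smul_const v).const_add p
      simpa using h
    have h := hinv.smul hlin
    exact h.congr_deriv (by simp)
  · apply Filter.Eventually.of_forall
    intro t
    apply mem_Mset.2
    constructor
    · simp [Complex.smul_im, Complex.add_im, hpim, h1]
    · have hexp : Bf (p + t • v) (p + t • v) = 1 + t ^ 2 * a := by
        rw [Bf_add_left, Bf_add_right, Bf_add_right, Bf_smul_left, Bf_smul_right,
          Bf_smul_left, Bf_smul_right, Bf_symm v p, hpQ, h2, ha]
        ring
      rw [Bf_smul_left, Bf_smul_right, hexp, ← mul_assoc, ← mul_inv,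
        Real.mul_self_sqrt (hupos t).le]
      exact inv_mul_cancel₀ (hupos t).ne'

lemma tangentSet_eq {p : (Fin n → ℂ) × ℂ} (hp : p ∈ Mset n) :
    TangentSet (Mset n) p = {v | v.2.im = 0 ∧ Bf p v = 0} :=
  Set.ext fun v => ⟨fun h => tangentSet_subset h, fun ⟨h1, h2⟩ => tangent_mem hp h1 h2⟩


/-- The Hermitian pairing with `p.1`, as a `ℂ`-linear functional. -/
def pairL (p : (Fin n → ℂ) × ℂ) : (Fin n → ℂ) →ₗ[ℂ] ℂ where
  toFun z := ∑ j, (starRingEnd ℂ) (p.1 j) * z j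
  map_add' z w := by
    simp only [Pi.add_apply, mul_add]
    exact Finset.sum_add_distrib
  map_smul' c z := by
    simp only [Pi.smul_apply, smul_eq_mul, RingHom.id_apply, Finset.mul_sum]
    exact Finset.sum_congr rfl fun j _ => by ring

lemma Bf_pair_re (p : (Fin n → ℂ) × ℂ) (z : Fin n → ℂ) :
    Bf p (z, 0) = (pairL p z).re := by
  unfold Bf pairL
  simp only [LinearMap.coe_mk, AddHom.coe_mk, Complex.re_sum]
  simp only [Complex.mul_re, Complex.conj_re, Complex.conj_im, Complex.zero_re, Complex.zero_im]
  rw [show (∑ j, ((p.1 j).re * (z j).re - -(p.1 j).im * (z j).im))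
      = ∑ j, ((p.1 j).re * (z j).re + (p.1 j).im * (z j).im)
      from Finset.sum_congr rfl fun j _ => by ring]
  ring

lemma Bf_pair_im (p : (Fin n → ℂ) × ℂ) (z : Fin n → ℂ) :
    Bf p (Complex.I • (z, (0:ℂ))) = -(pairL p z).im := by
  unfold Bf pairL
  simp only [Prod.smul_fst, Prod.smul_snd, Pi.smul_apply, smul_eq_mul, mul_zero,
    LinearMap.coe_mk, AddHom.coe_mk, Complex.im_sum]
  simp only [Complex.mul_re, Complex.mul_im, Complex.I_re, Complex.I_im, Complex.conj_re,
    Complex.conj_im, Complex.zero_re, Complex.zero_im]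
  rw [← Finset.sum_neg_distrib, show (p.2.re * 0 + p.2.im * 0 : ℝ) = 0 from by ring, add_zero]
  exact Finset.sum_congr rfl fun j _ => by ring

lemma complexTangent_eq {p : (Fin n → ℂ) × ℂ} (hp : p ∈ Mset n) :
    complexTangent (Mset n) p = {v | v.2 = 0 ∧ pairL p v.1 = 0} := by
  ext v
  unfold complexTangent
  simp only [Set.mem_setOf_eq, tangentSet_eq hp]
  constructor
  · rintro ⟨⟨h1, h2⟩, ⟨h3, h4⟩⟩
    have hI2 : (Complex.I • v).2 = Complex.I * v.2 := rfl
    have hre : v.2.re = 0 := by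
      have : (Complex.I * v.2).im = v.2.re := by simp [Complex.mul_im]
      rw [hI2, this] at h3
      exact h3
    have hv2 : v.2 = 0 := Complex.ext hre h1
    refine ⟨hv2, ?_⟩
    have hv : v = (v.1, (0:ℂ)) := by rw [← hv2]
    apply Complex.ext
    · have h2x : Bf p (v.1, (0:ℂ)) = 0 := by rw [← hv]; exact h2
      rw [Bf_pair_re] at h2x
      simpa using h2x
    · have h4x : Bf p (Complex.I • (v.1, (0:ℂ))) = 0 := by rw [← hv]; exact h4
      rw [Bf_pair_im] at h4x
      simpa using neg_eq_zero.1 h4x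
  · rintro ⟨hv2, hpair⟩
    have hv : v = (v.1, (0:ℂ)) := by rw [← hv2]
    constructor
    · refine ⟨by rw [hv2]; rfl, ?_⟩
      rw [hv, Bf_pair_re, hpair]
      rfl
    · constructor
      · show (Complex.I • v).2.im = 0
        have : (Complex.I • v).2 = Complex.I * v.2 := rfl
        rw [this, hv2, mul_zero]
        rfl
      · rw [hv, Bf_pair_im, hpair]
        simp

/-- The complex tangent space as a real submodule. -/
def cTsub (p : (Fin n → ℂ) × ℂ) : Submodule ℝ ((Fin n → ℂ) × ℂ) :=
  Submodule.map (LinearMap.inl ℝ (Fin n → ℂ) ℂ)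
    ((LinearMap.ker (pairL p)).restrictScalars ℝ)

lemma complexTangent_eq_sub {p : (Fin n → ℂ) × ℂ} (hp : p ∈ Mset n) :
    complexTangent (Mset n) p = (cTsub p : Set ((Fin n → ℂ) × ℂ)) := by
  rw [complexTangent_eq hp]
  ext v
  simp only [Set.mem_setOf_eq, cTsub, Submodule.map_coe, Set.mem_image, SetLike.mem_coe,
    Submodule.restrictScalars_mem, LinearMap.mem_ker]
  constructor
  · rintro ⟨hv2, hpair⟩
    refine ⟨v.1, hpair, ?_⟩
    have : (LinearMap.inl ℝ (Fin n → ℂ) ℂ) v.1 = (v.1, (0:ℂ)) := rfl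
    rw [this]
    exact Prod.ext rfl hv2.symm
  · rintro ⟨z, hz, hzv⟩
    subst hzv
    exact ⟨rfl, hz⟩

lemma crdim_eq {p : (Fin n → ℂ) × ℂ} (hp : p ∈ Mset n) :
    CRDimAt (Mset n) p = 2 * Module.finrank ℂ (LinearMap.ker (pairL p)) := by
  unfold CRDimAt
  rw [complexTangent_eq_sub hp, Submodule.span_eq]
  have e1 : (cTsub p) ≃ₗ[ℝ] ((LinearMap.ker (pairL p)).restrictScalars ℝ) :=
    (Submodule.equivMapOfInjective (LinearMap.inl ℝ (Fin n → ℂ) ℂ)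
      (LinearMap.inl_injective) _).symm
  rw [e1.finrank_eq]
  have e2 : Module.finrank ℝ ((LinearMap.ker (pairL p)).restrictScalars ℝ)
      = Module.finrank ℝ (LinearMap.ker (pairL p)) := rfl
  rw [e2, ← Module.finrank_mul_finrank ℝ ℂ (LinearMap.ker (pairL p)),
    Complex.finrank_real_complex]

lemma pairL_self (p : (Fin n → ℂ) × ℂ) : (pairL p p.1).re = ∑ j, ‖p.1 j‖ ^ 2 := by
  unfold pairL
  simp only [LinearMap.coe_mk, AddHom.coe_mk, Complex.re_sum]
  exact Finset.sum_congr rfl fun j _ => by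
    rw [Complex.mul_re, Complex.conj_re, Complex.conj_im, norm_sq_c]; ring

lemma crdim_of_ne {p : (Fin n → ℂ) × ℂ} (hp : p ∈ Mset n) (hp1 : p.1 ≠ 0) :
    CRDimAt (Mset n) p + 2 = 2 * n := by
  rw [crdim_eq hp]
  have hne : pairL p ≠ 0 := by
    intro h
    have h2 : (pairL p) p.1 = 0 := by rw [h]; rfl
    have h3 : (pairL p p.1).re = 0 := by rw [h2]; rfl
    rw [pairL_self] at h3
    have : ∀ j, p.1 j = 0 := by
      intro j
      have := (Finset.sum_eq_zero_iff_of_nonneg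
        (fun j (_ : j ∈ Finset.univ) => sq_nonneg ‖p.1 j‖)).1 h3 j (Finset.mem_univ j)
      have h4 : ‖p.1 j‖ = 0 := by nlinarith [norm_nonneg (p.1 j)]
      exact norm_eq_zero.1 h4
    exact hp1 (funext this)
  have hsurj : Function.Surjective (pairL p) := by
    rcases DFunLike.ne_iff.1 hne with ⟨z, hz⟩
    simp only [LinearMap.zero_apply] at hz
    intro c
    refine ⟨(c / pairL p z) • z, ?_⟩
    rw [map_smul, smul_eq_mul, div_mul_cancel₀ _ hz]
  have hrange : LinearMap.range (pairL p) = ⊤ := LinearMap.range_eq_top.2 hsurj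
  have hrk := LinearMap.finrank_range_add_finrank_ker (pairL p)
  rw [hrange, finrank_top, Module.finrank_self] at hrk
  have hpi : Module.finrank ℂ (Fin n → ℂ) = n := by
    rw [Module.finrank_pi_fintype ℂ]
    simp [Module.finrank_self]
  rw [hpi] at hrk
  omega


lemma crdim_of_zero {p : (Fin n → ℂ) × ℂ} (hp : p ∈ Mset n) (hp1 : p.1 = 0) :
    CRDimAt (Mset n) p = 2 * n := by
  rw [crdim_eq hp]
  have hz : pairL p = 0 := by
    apply LinearMap.ext
    intro z
    show (∑ j, (starRingEnd ℂ) (p.1 j) * z j) = 0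
    rw [hp1]
    simp
  rw [hz, LinearMap.ker_zero, finrank_top]
  congr 1
  rw [Module.finrank_pi_fintype ℂ]
  simp [Module.finrank_self]

lemma mem_Mset_pole {σ : ℂ} (hσ : σ = 1 ∨ σ = -1) :
    ((0 : Fin n → ℂ), σ) ∈ Mset n := by
  rcases hσ with h | h <;> subst h <;>
    exact ⟨by simp, by simp⟩

lemma pole_fst_zero_cases {p : (Fin n → ℂ) × ℂ} (hp : p ∈ Mset n) (h1 : p.1 = 0) :
    p = ((0 : Fin n → ℂ), (1:ℂ)) ∨ p = ((0 : Fin n → ℂ), (-1:ℂ)) := by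
  obtain ⟨him, hq⟩ := hp
  rw [h1] at hq
  simp only [Pi.zero_apply, norm_zero] at hq
  have hq' : p.2.re ^ 2 = 1 := by
    have : (∑ _j : Fin n, (0:ℝ) ^ 2) = 0 := by simp
    rw [this] at hq
    linarith
  have hre : p.2.re = 1 ∨ p.2.re = -1 := by
    rcases mul_eq_zero.1 (show (p.2.re - 1) * (p.2.re + 1) = 0 by nlinarith) with h | h
    · left; linarith
    · right; linarith
  rcases hre with h | h
  · left
    exact Prod.ext h1 (Complex.ext h him)
  · right
    exact Prod.ext h1 (Complex.ext (by simpa using h) (by simpa using him))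

lemma not_crnear_pole (hn : 1 ≤ n) {σ : ℂ} (hσ : σ = 1 ∨ σ = -1) :
    ¬ IsCRNear (Mset n) ((0 : Fin n → ℂ), σ) := by
  rintro ⟨W, hW, m, hm⟩
  set p0 : (Fin n → ℂ) × ℂ := ((0 : Fin n → ℂ), σ) with hp0
  have hp0M : p0 ∈ Mset n := mem_Mset_pole hσ
  have hm0 : m = 2 * n := by
    rw [← hm p0 ⟨hp0M, mem_of_mem_nhds hW⟩, crdim_of_zero hp0M rfl]
  -- the curve of nearby points with nonzero first component
  set q : ℝ → (Fin n → ℂ) × ℂ :=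
    fun t => (Real.sqrt (1 + n * t ^ 2))⁻¹ • ((fun _ => (t:ℂ)), σ) with hq
  have hpos : ∀ t : ℝ, (0:ℝ) < 1 + n * t ^ 2 := by
    intro t
    have : (0:ℝ) ≤ n * t ^ 2 := by positivity
    linarith
  have hqM : ∀ t, q t ∈ Mset n := by
    intro t
    apply mem_Mset.2
    constructor
    · show ((Real.sqrt (1 + n * t ^ 2))⁻¹ • σ).im = 0
      rcases hσ with h | h <;> subst h <;> simp [Complex.smul_im]
    · rw [hq]
      simp only
      rw [Bf_smul_left, Bf_smul_right, Bf_self_eq]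
      have hσre : (σ.re ^ 2 + σ.im ^ 2 : ℝ) = 1 := by
        rcases hσ with h | h <;> subst h <;> norm_num
      simp only [Complex.norm_real]
      have : (∑ _j : Fin n, ‖t‖ ^ 2) + (σ.re ^ 2 + σ.im ^ 2) = 1 + n * t ^ 2 := by
        rw [hσre, Finset.sum_const, Finset.card_univ, Fintype.card_fin, nsmul_eq_mul,
          Real.norm_eq_abs, sq_abs]
        ring
      rw [this, ← mul_assoc, ← mul_inv, Real.mul_self_sqrt (hpos t).le]
      exact inv_mul_cancel₀ (hpos t).ne'
  have hcont : Continuous q := by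
    apply Continuous.fun_smul
    · exact (Real.continuous_sqrt.comp (by continuity)).inv₀ fun t => by
        simp only [Function.comp_apply]
        exact (Real.sqrt_pos.2 (hpos t)).ne'
    · exact Continuous.prodMk (continuous_pi fun j => Complex.continuous_ofReal.comp continuous_id) continuous_const
  have hq0 : q 0 = p0 := by
    rw [hq, hp0]
    simp only [Complex.ofReal_zero, ne_eq, OfNat.ofNat_ne_zero, not_false_eq_true, zero_pow,
      mul_zero, add_zero, Real.sqrt_one, inv_one, one_smul]
    exact Prod.ext rfl rfl
  have hW' : ∀ᶠ x in nhds p0, x ∈ W := hW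
  have hev : ∀ᶠ t in nhds (0:ℝ), q t ∈ W :=
    (hcont.tendsto' 0 p0 hq0).eventually hW'
  have hne : ∃ t : ℝ, t ≠ 0 ∧ q t ∈ W := by
    have h2 : ∀ᶠ t in nhdsWithin (0:ℝ) {(0:ℝ)}ᶜ, q t ∈ W := hev.filter_mono nhdsWithin_le_nhds
    rcases (h2.and self_mem_nhdsWithin).exists with ⟨t, ht1, ht2⟩
    exact ⟨t, ht2, ht1⟩
  obtain ⟨t, ht0, htW⟩ := hne
  have hq1 : (q t).1 ≠ 0 := by
    intro h
    have hc : ((Real.sqrt (1 + n * t ^ 2))⁻¹ : ℝ) • (t:ℂ) = 0 := congrFun h (⟨0, hn⟩ : Fin n)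
    rcases smul_eq_zero.1 hc with h' | h'
    · exact (inv_ne_zero (Real.sqrt_pos.2 (hpos t)).ne') h'
    · exact ht0 (by exact_mod_cast h')
  have heq := hm (q t) ⟨hqM t, htW⟩
  have h2 := crdim_of_ne (hqM t) hq1
  omega

lemma crnear_of_ne {p : (Fin n → ℂ) × ℂ} (hp : p ∈ Mset n) (hp1 : p.1 ≠ 0) :
    IsCRNear (Mset n) p := by
  refine ⟨{x | x.1 ≠ 0}, ?_, 2 * n - 2, ?_⟩
  · exact (isOpen_compl_singleton.preimage continuous_fst).mem_nhds hp1
  · rintro q ⟨hqM, hqW⟩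
    have := crdim_of_ne hqM hqW
    omega

lemma crSingular_eq (hn : 1 ≤ n) :
    crSingularSet (Mset n) = {((0 : Fin n → ℂ), (1 : ℂ)), ((0 : Fin n → ℂ), (-1 : ℂ))} := by
  ext p
  constructor
  · rintro ⟨hpM, hnot⟩
    by_cases h1 : p.1 = 0
    · rcases pole_fst_zero_cases hpM h1 with h | h
      · exact Or.inl h
      · exact Or.inr h
    · exact absurd (crnear_of_ne hpM h1) hnot
  · intro hp
    rcases hp with h | h <;> subst h
    · exact ⟨mem_Mset_pole (Or.inl rfl), not_crnear_pole hn (Or.inl rfl)⟩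
    · exact ⟨mem_Mset_pole (Or.inr rfl), not_crnear_pole hn (Or.inr rfl)⟩


lemma continuous_QF : Continuous (fun x : (Fin n → ℂ) × ℂ => (∑ j, ‖x.1 j‖ ^ 2) + x.2.re ^ 2) := by
  apply Continuous.add
  · exact continuous_finset_sum _ fun j _ =>
      ((continuous_apply j).comp continuous_fst).norm.pow 2
  · exact (Complex.continuous_re.comp continuous_snd).pow 2

lemma Hset_subset_ball : Hset n ⊆ Metric.closedBall 0 1 := by
  rintro x ⟨him, hq⟩
  rw [Metric.mem_closedBall, dist_zero_right]
  have hterm : ∀ j, ‖x.1 j‖ ^ 2 ≤ 1 := by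
    intro j
    have h1 : ‖x.1 j‖ ^ 2 ≤ ∑ i, ‖x.1 i‖ ^ 2 :=
      Finset.single_le_sum (fun i _ => sq_nonneg ‖x.1 i‖) (Finset.mem_univ j)
    nlinarith [sq_nonneg x.2.re]
  have h1 : ‖x.1‖ ≤ 1 := by
    apply (pi_norm_le_iff_of_nonneg zero_le_one).2
    intro j
    nlinarith [norm_nonneg (x.1 j), hterm j]
  have h2 : ‖x.2‖ ≤ 1 := by
    have hsq : ‖x.2‖ ^ 2 ≤ 1 := by
      rw [norm_sq_c, him]
      have hsum : (0:ℝ) ≤ ∑ i, ‖x.1 i‖ ^ 2 :=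
        Finset.sum_nonneg fun i _ => sq_nonneg _
      nlinarith
    nlinarith [norm_nonneg x.2]
  calc ‖x‖ = max ‖x.1‖ ‖x.2‖ := rfl
    _ ≤ 1 := max_le h1 h2

lemma isClosed_Hset : IsClosed (Hset n) := by
  have : Hset n = {x : (Fin n → ℂ) × ℂ | x.2.im = 0} ∩
      {x | (∑ j, ‖x.1 j‖ ^ 2) + x.2.re ^ 2 ≤ 1} := rfl
  rw [this]
  exact (isClosed_eq (Complex.continuous_im.comp continuous_snd) continuous_const).inter
    (isClosed_le continuous_QF continuous_const)

lemma isClosed_Mset : IsClosed (Mset n) := by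
  have : Mset n = {x : (Fin n → ℂ) × ℂ | x.2.im = 0} ∩
      {x | (∑ j, ‖x.1 j‖ ^ 2) + x.2.re ^ 2 = 1} := rfl
  rw [this]
  exact (isClosed_eq (Complex.continuous_im.comp continuous_snd) continuous_const).inter
    (isClosed_eq continuous_QF continuous_const)

lemma Mset_subset_Hset : Mset n ⊆ Hset n := fun x ⟨h1, h2⟩ => ⟨h1, h2.le⟩

lemma isCompact_Hset : IsCompact (Hset n) :=
  (isCompact_closedBall 0 1).of_isClosed_subset isClosed_Hset Hset_subset_ball

lemma isCompact_Mset : IsCompact (Mset n) :=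
  (isCompact_closedBall 0 1).of_isClosed_subset isClosed_Mset
    (Mset_subset_Hset.trans Hset_subset_ball)

lemma analyticAt_sqrt {t : ℝ} (ht : 0 < t) : AnalyticAt ℝ Real.sqrt t := by
  have hmem : (t : ℂ) ∈ Complex.slitPlane := Complex.ofReal_mem_slitPlane.2 ht
  have hlog : AnalyticAt ℝ Complex.log (t : ℂ) := (analyticAt_clog hmem).restrictScalars
  have h1 : AnalyticAt ℝ (fun x : ℝ => Complex.log (x : ℂ) * 2⁻¹) t :=
    (hlog.comp (Complex.ofRealCLM.analyticAt t)).mul analyticAt_const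
  have hexp : AnalyticAt ℝ Complex.exp (Complex.log (t:ℂ) * 2⁻¹) :=
    (analyticAt_cexp).restrictScalars
  have h15 : AnalyticAt ℝ (fun x : ℝ => Complex.exp (Complex.log (x:ℂ) * 2⁻¹)) t :=
    AnalyticAt.comp (f := fun x : ℝ => Complex.log (x:ℂ) * 2⁻¹) (g := Complex.exp) hexp h1
  have h2 : AnalyticAt ℝ (fun x : ℝ => (Complex.exp (Complex.log (x:ℂ) * 2⁻¹)).re) t :=
    (Complex.reCLM.analyticAt _).comp h15
  apply h2.congr
  filter_upwards [isOpen_Ioi.mem_nhds (Set.mem_Ioi.2 ht)] with x hx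
  have hx0 : (0:ℝ) < x := hx
  rw [← Complex.ofReal_log hx0.le]
  have heq : ((Real.log x : ℂ)) * 2⁻¹ = ((Real.log x / 2 : ℝ) : ℂ) := by push_cast; ring
  rw [heq, ← Complex.ofReal_exp, Complex.ofReal_re, Real.sqrt_eq_rpow,
    Real.rpow_def_of_pos hx0]
  ring_nf

lemma analyticAt_sig (x : (Fin n → ℂ) × ℂ) :
    AnalyticAt ℝ (fun y : (Fin n → ℂ) × ℂ => ∑ j, ‖y.1 j‖ ^ 2) x := by
  have : (fun y : (Fin n → ℂ) × ℂ => ∑ j, ‖y.1 j‖ ^ 2)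
      = fun y => ∑ j, ((y.1 j).re * (y.1 j).re + (y.1 j).im * (y.1 j).im) := by
    funext y
    exact Finset.sum_congr rfl fun j _ => norm_sq_c _
  rw [this]
  apply Finset.analyticAt_fun_sum
  intro j _
  have hre : AnalyticAt ℝ (fun y : (Fin n → ℂ) × ℂ => (y.1 j).re) x :=
    (Complex.reCLM.comp ((ContinuousLinearMap.proj j).comp
      (ContinuousLinearMap.fst ℝ (Fin n → ℂ) ℂ))).analyticAt x
  have him : AnalyticAt ℝ (fun y : (Fin n → ℂ) × ℂ => (y.1 j).im) x :=
    (Complex.imCLM.comp ((ContinuousLinearMap.proj j).comp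
      (ContinuousLinearMap.fst ℝ (Fin n → ℂ) ℂ))).analyticAt x
  exact (hre.mul hre).add (him.mul him)


/-! ### Charts at the pole `(0, 1)` -/

/-- The graph function. -/
def sq1 (z : Fin n → ℂ) : ℝ := Real.sqrt (1 - ∑ j, ‖z j‖ ^ 2)

def Uch (n : ℕ) : Set ((Fin n → ℂ) × ℂ) := {x | (∑ j, ‖x.1 j‖ ^ 2) < 1 ∧ 0 < x.2.re}

def Vch (n : ℕ) : Set ((Fin n → ℂ) × ℂ) := {y | (∑ j, ‖y.1 j‖ ^ 2) < 1 ∧ 0 < y.2.re + sq1 y.1}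

def φch (x : (Fin n → ℂ) × ℂ) : (Fin n → ℂ) × ℂ := (x.1, x.2 - (sq1 x.1 : ℂ))

def ψch (y : (Fin n → ℂ) × ℂ) : (Fin n → ℂ) × ℂ := (y.1, y.2 + (sq1 y.1 : ℂ))

lemma continuous_sq1 : Continuous (sq1 (n := n)) :=
  Real.continuous_sqrt.comp (continuous_const.sub
    (continuous_finset_sum _ fun j _ => ((continuous_apply j).norm.pow 2)))

lemma isOpen_Uch : IsOpen (Uch n) := by
  apply IsOpen.inter
  · exact isOpen_lt (continuous_finset_sum _ fun j _ =>
      (((continuous_apply j).comp continuous_fst).norm.pow 2)) continuous_const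
  · exact isOpen_lt continuous_const (Complex.continuous_re.comp continuous_snd)

lemma isOpen_Vch : IsOpen (Vch n) := by
  apply IsOpen.inter
  · exact isOpen_lt (continuous_finset_sum _ fun j _ =>
      (((continuous_apply j).comp continuous_fst).norm.pow 2)) continuous_const
  · exact isOpen_lt continuous_const ((Complex.continuous_re.comp continuous_snd).add
      (continuous_sq1.comp continuous_fst))

lemma analyticAt_sq1c {x : (Fin n → ℂ) × ℂ} (hx : (∑ j, ‖x.1 j‖ ^ 2) < 1) :
    AnalyticAt ℝ (fun y : (Fin n → ℂ) × ℂ => ((sq1 y.1 : ℝ) : ℂ)) x := by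
  have harg : AnalyticAt ℝ (fun y : (Fin n → ℂ) × ℂ => 1 - ∑ j, ‖y.1 j‖ ^ 2) x :=
    analyticAt_const.sub (analyticAt_sig x)
  have hsqrt : AnalyticAt ℝ Real.sqrt (1 - ∑ j, ‖x.1 j‖ ^ 2) :=
    analyticAt_sqrt (by linarith)
  exact Complex.ofRealCLM.analyticAt _ |>.comp (AnalyticAt.comp (g := Real.sqrt)
    (f := fun y : (Fin n → ℂ) × ℂ => 1 - ∑ j, ‖y.1 j‖ ^ 2) hsqrt harg)

lemma analyticAt_φch {x : (Fin n → ℂ) × ℂ} (hx : (∑ j, ‖x.1 j‖ ^ 2) < 1) :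
    AnalyticAt ℝ (φch (n := n)) x := by
  apply AnalyticAt.prod
  · exact (ContinuousLinearMap.fst ℝ (Fin n → ℂ) ℂ).analyticAt x
  · exact ((ContinuousLinearMap.snd ℝ (Fin n → ℂ) ℂ).analyticAt x).sub (analyticAt_sq1c hx)

lemma analyticAt_ψch {x : (Fin n → ℂ) × ℂ} (hx : (∑ j, ‖x.1 j‖ ^ 2) < 1) :
    AnalyticAt ℝ (ψch (n := n)) x := by
  apply AnalyticAt.prod
  · exact (ContinuousLinearMap.fst ℝ (Fin n → ℂ) ℂ).analyticAt x
  · exact ((ContinuousLinearMap.snd ℝ (Fin n → ℂ) ℂ).analyticAt x).add (analyticAt_sq1c hx)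

lemma φch_maps {x : (Fin n → ℂ) × ℂ} (hx : x ∈ Uch n) :
    φch x ∈ Vch n ∧ ψch (φch x) = x := by
  obtain ⟨h1, h2⟩ := hx
  refine ⟨⟨h1, ?_⟩, ?_⟩
  · show 0 < (x.2 - (sq1 x.1 : ℂ)).re + sq1 x.1
    simp only [Complex.sub_re, Complex.ofReal_re]
    linarith
  · show ((φch x).1, (φch x).2 + (sq1 (φch x).1 : ℂ)) = x
    show (x.1, (x.2 - (sq1 x.1 : ℂ)) + (sq1 x.1 : ℂ)) = x
    exact Prod.ext rfl (by ring)

lemma ψch_maps {y : (Fin n → ℂ) × ℂ} (hy : y ∈ Vch n) :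
    ψch y ∈ Uch n ∧ φch (ψch y) = y := by
  obtain ⟨h1, h2⟩ := hy
  refine ⟨⟨h1, ?_⟩, ?_⟩
  · show 0 < (y.2 + (sq1 y.1 : ℂ)).re
    simp only [Complex.add_re, Complex.ofReal_re]
    linarith
  · show (y.1, (y.2 + (sq1 y.1 : ℂ)) - (sq1 y.1 : ℂ)) = y
    exact Prod.ext rfl (by ring)

/-- Codimension-two subspace `{w = 0}`. -/
def Fsub (n : ℕ) : Submodule ℝ ((Fin n → ℂ) × ℂ) := LinearMap.ker (LinearMap.snd ℝ (Fin n → ℂ) ℂ)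

/-- The hyperplane `{Im w = 0}`. -/
def Gsub (n : ℕ) : Submodule ℝ ((Fin n → ℂ) × ℂ) :=
  LinearMap.ker (Complex.imLm ∘ₗ LinearMap.snd ℝ (Fin n → ℂ) ℂ)

lemma mem_Fsub {y : (Fin n → ℂ) × ℂ} : y ∈ Fsub n ↔ y.2 = 0 := Iff.rfl

lemma mem_Gsub {y : (Fin n → ℂ) × ℂ} : y ∈ Gsub n ↔ y.2.im = 0 := Iff.rfl

lemma finrank_E : Module.finrank ℝ ((Fin n → ℂ) × ℂ) = 2 * n + 2 := by
  rw [Module.finrank_prod, Module.finrank_pi_fintype ℝ, Complex.finrank_real_complex]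
  simp only [Complex.finrank_real_complex, Finset.sum_const, Finset.card_univ,
    Fintype.card_fin, smul_eq_mul]
  omega

lemma finrank_Fsub : Module.finrank ℝ (Fsub n) = 2 * n := by
  have h := LinearMap.finrank_range_add_finrank_ker (LinearMap.snd ℝ (Fin n → ℂ) ℂ)
  rw [LinearMap.range_eq_top.2 Prod.snd_surjective, finrank_top,
    Complex.finrank_real_complex, finrank_E] at h
  unfold Fsub
  omega

lemma finrank_Gsub : Module.finrank ℝ (Gsub n) = 2 * n + 1 := by
  have h := LinearMap.finrank_range_add_finrank_ker
    (Complex.imLm ∘ₗ LinearMap.snd ℝ (Fin n → ℂ) ℂ)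
  have hsurj : Function.Surjective (Complex.imLm ∘ₗ LinearMap.snd ℝ (Fin n → ℂ) ℂ) := by
    intro r
    exact ⟨((0 : Fin n → ℂ), (Complex.I * r : ℂ)), by
      show (Complex.I * (r:ℂ)).im = r
      simp⟩
  rw [LinearMap.range_eq_top.2 hsurj, finrank_top, Module.finrank_self, finrank_E] at h
  unfold Gsub
  omega

/-- The boundary-defining functional. -/
def ℓch (n : ℕ) : ((Fin n → ℂ) × ℂ) →ₗ[ℝ] ℝ := -(Complex.reLm ∘ₗ LinearMap.snd ℝ (Fin n → ℂ) ℂ)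

lemma ℓch_apply (y : (Fin n → ℂ) × ℂ) : ℓch n y = -y.2.re := rfl

lemma x2_ofReal {x : (Fin n → ℂ) × ℂ} (him : x.2.im = 0) : x.2 = (x.2.re : ℂ) :=
  Complex.ext rfl (by simpa using him)

lemma chartM_image : φch '' (Mset n ∩ Uch n) = Vch n ∩ (Fsub n : Set ((Fin n → ℂ) × ℂ)) := by
  ext y
  constructor
  · rintro ⟨x, ⟨⟨him, hq⟩, ⟨hσ, hre⟩⟩, rfl⟩
    have hs : sq1 x.1 = x.2.re := by
      unfold sq1
      rw [show (1 - ∑ j, ‖x.1 j‖ ^ 2) = x.2.re ^ 2 from by linarith, Real.sqrt_sq hre.le]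
    constructor
    · refine ⟨hσ, ?_⟩
      show 0 < (x.2 - (sq1 x.1 : ℂ)).re + sq1 (x.1)
      simp only [Complex.sub_re, Complex.ofReal_re]
      linarith
    · show (x.2 - (sq1 x.1 : ℂ)) = 0
      rw [hs, x2_ofReal him]
      simp
  · rintro ⟨⟨hσ, _⟩, hF⟩
    have hy2 : y.2 = 0 := hF
    have hspos : 0 < sq1 y.1 := Real.sqrt_pos.2 (by linarith)
    refine ⟨ψch y, ⟨?_, ?_⟩, (ψch_maps ⟨hσ, by rw [hy2]; simpa using hspos⟩).2⟩
    · constructor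
      · show (y.2 + (sq1 y.1 : ℂ)).im = 0
        rw [hy2]
        simp
      · show (∑ j, ‖y.1 j‖ ^ 2) + (y.2 + (sq1 y.1 : ℂ)).re ^ 2 = 1
        rw [hy2]
        simp only [zero_add, Complex.ofReal_re]
        unfold sq1
        rw [Real.sq_sqrt (by linarith)]
        ring
    · refine ⟨hσ, ?_⟩
      show 0 < (y.2 + (sq1 y.1 : ℂ)).re
      rw [hy2]
      simpa using hspos

lemma chartH_image : φch '' (Hset n ∩ Uch n)
    = {y ∈ Vch n ∩ (Gsub n : Set ((Fin n → ℂ) × ℂ)) | 0 ≤ ℓch n y} := by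
  ext y
  constructor
  · rintro ⟨x, ⟨⟨him, hq⟩, ⟨hσ, hre⟩⟩, rfl⟩
    have hsq : x.2.re ^ 2 ≤ 1 - ∑ j, ‖x.1 j‖ ^ 2 := by linarith
    have hles : x.2.re ≤ sq1 x.1 := by
      have h1 : Real.sqrt (x.2.re ^ 2) ≤ sq1 x.1 := Real.sqrt_le_sqrt hsq
      rwa [Real.sqrt_sq hre.le] at h1
    refine ⟨⟨⟨hσ, ?_⟩, ?_⟩, ?_⟩
    · show 0 < (x.2 - (sq1 x.1 : ℂ)).re + sq1 x.1
      simp only [Complex.sub_re, Complex.ofReal_re]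
      linarith
    · show (x.2 - (sq1 x.1 : ℂ)).im = 0
      simp [him]
    · rw [ℓch_apply]
      show 0 ≤ -(x.2 - (sq1 x.1 : ℂ)).re
      simp only [Complex.sub_re, Complex.ofReal_re]
      linarith
  · rintro ⟨⟨⟨hσ, hV⟩, hG⟩, hℓ⟩
    have him : y.2.im = 0 := hG
    rw [ℓch_apply] at hℓ
    have hre : y.2.re ≤ 0 := by linarith
    have hs0 : 0 ≤ 1 - ∑ j, ‖y.1 j‖ ^ 2 := by linarith
    have hssq : sq1 y.1 ^ 2 = 1 - ∑ j, ‖y.1 j‖ ^ 2 := Real.sq_sqrt hs0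
    refine ⟨ψch y, ⟨⟨?_, ?_⟩, ⟨hσ, ?_⟩⟩, (ψch_maps ⟨hσ, hV⟩).2⟩
    · show (y.2 + (sq1 y.1 : ℂ)).im = 0
      simp [him]
    · show (∑ j, ‖y.1 j‖ ^ 2) + (y.2 + (sq1 y.1 : ℂ)).re ^ 2 ≤ 1
      have h1 : (y.2 + (sq1 y.1 : ℂ)).re = y.2.re + sq1 y.1 := by
        simp
      rw [h1]
      nlinarith [hV, Real.sqrt_nonneg (1 - ∑ j, ‖y.1 j‖ ^ 2)]
    · show 0 < (y.2 + (sq1 y.1 : ℂ)).re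
      simpa using hV

lemma chartMb_image : φch '' (Mset n ∩ Uch n)
    = {y ∈ Vch n ∩ (Gsub n : Set ((Fin n → ℂ) × ℂ)) | ℓch n y = 0} := by
  rw [chartM_image]
  ext y
  simp only [Set.mem_inter_iff, Set.mem_setOf_eq, SetLike.mem_coe, mem_Fsub, mem_Gsub,
    ℓch_apply]
  constructor
  · rintro ⟨hV, hy2⟩
    rw [hy2]
    simp [hV]
  · rintro ⟨⟨hV, him⟩, hre⟩
    exact ⟨hV, Complex.ext (by simpa using hre) him⟩


/-! ### Transport by an ambient linear automorphism -/

lemma transport_subAt {d : ℕ} {Y : Set ((Fin n → ℂ) × ℂ)} {p : (Fin n → ℂ) × ℂ}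
    {A B : ((Fin n → ℂ) × ℂ) →L[ℝ] ((Fin n → ℂ) × ℂ)}
    (hBA : ∀ x, B (A x) = x) (hAB : ∀ x, A (B x) = x)
    (hY : A '' Y = Y)
    (h : AnalyticSubmanifoldAt d Y (A p)) : AnalyticSubmanifoldAt d Y p := by
  obtain ⟨U, V, hU, hpU, hV, φ, ψ, hφ, hψ, hφV, hψU, F, hF, himg⟩ := h
  refine ⟨A ⁻¹' U, V, hU.preimage A.continuous, hpU, hV, φ ∘ A, B ∘ ψ,
    fun x hx => (hφ (A x) hx).comp (A.analyticAt x),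
    fun y hy => (B.analyticAt _).comp (hψ y hy), ?_, ?_, F, hF, ?_⟩
  · intro x hx
    refine ⟨(hφV (A x) hx).1, ?_⟩
    show B (ψ (φ (A x))) = x
    rw [(hφV (A x) hx).2, hBA]
  · intro y hy
    refine ⟨?_, ?_⟩
    · show A (B (ψ y)) ∈ U
      rw [hAB]
      exact (hψU y hy).1
    · show φ (A (B (ψ y))) = y
      rw [hAB]
      exact (hψU y hy).2
  · rw [Set.image_comp, Set.image_inter_preimage, hY] at *
    exact himg

lemma transport_subWithBdAt {d : ℕ} {Y bd : Set ((Fin n → ℂ) × ℂ)} {p : (Fin n → ℂ) × ℂ}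
    {A B : ((Fin n → ℂ) × ℂ) →L[ℝ] ((Fin n → ℂ) × ℂ)}
    (hBA : ∀ x, B (A x) = x) (hAB : ∀ x, A (B x) = x)
    (hY : A '' Y = Y) (hbd : A '' bd = bd)
    (h : AnalyticSubmanifoldWithBoundaryAt d Y bd (A p)) :
    AnalyticSubmanifoldWithBoundaryAt d Y bd p := by
  obtain ⟨U, V, hU, hpU, hV, φ, ψ, hφ, hψ, hφV, hψU, F, hF, ℓ, hℓ, himg, himgb⟩ := h
  refine ⟨A ⁻¹' U, V, hU.preimage A.continuous, hpU, hV, φ ∘ A, B ∘ ψ,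
    fun x hx => (hφ (A x) hx).comp (A.analyticAt x),
    fun y hy => (B.analyticAt _).comp (hψ y hy), ?_, ?_, F, hF, ℓ, hℓ, ?_, ?_⟩
  · intro x hx
    refine ⟨(hφV (A x) hx).1, ?_⟩
    show B (ψ (φ (A x))) = x
    rw [(hφV (A x) hx).2, hBA]
  · intro y hy
    refine ⟨?_, ?_⟩
    · show A (B (ψ y)) ∈ U
      rw [hAB]
      exact (hψU y hy).1
    · show φ (A (B (ψ y))) = y
      rw [hAB]
      exact (hψU y hy).2
  · rw [Set.image_comp, Set.image_inter_preimage, hY]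
    exact himg
  · rw [Set.image_comp, Set.image_inter_preimage, hbd]
    exact himgb

lemma image_eq_self_of_invol {f : ((Fin n → ℂ) × ℂ) → ((Fin n → ℂ) × ℂ)}
    (hf : ∀ x, f (f x) = x) {S : Set ((Fin n → ℂ) × ℂ)} (h : ∀ x ∈ S, f x ∈ S) :
    f '' S = S := by
  apply Set.Subset.antisymm
  · rintro y ⟨x, hx, rfl⟩
    exact h x hx
  · intro x hx
    exact ⟨f x, h x hx, hf x⟩

/-! ### The reflection -/

/-- Reflection through the hyperplane `Bf · d = 0` (as a continuous linear map). -/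
lemma Bf_sub_right (x y y' : (Fin n → ℂ) × ℂ) : Bf x (y - y') = Bf x y - Bf x y' := by
  rw [Bf_symm, Bf_sub_left, Bf_symm y, Bf_symm y']

def reflCLM (d : (Fin n → ℂ) × ℂ) : ((Fin n → ℂ) × ℂ) →L[ℝ] ((Fin n → ℂ) × ℂ) :=
  LinearMap.toContinuousLinearMap
    (LinearMap.id - (((2 / Bf d d) • BfLM d).smulRight d))

lemma reflCLM_apply (d x : (Fin n → ℂ) × ℂ) :
    reflCLM d x = x - (2 / Bf d d * Bf x d) • d := rfl

lemma reflCLM_invol {d : (Fin n → ℂ) × ℂ} (hd : d ≠ 0) (x : (Fin n → ℂ) × ℂ) :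
    reflCLM d (reflCLM d x) = x := by
  have hD : Bf d d ≠ 0 := (Bf_self_pos hd).ne'
  rw [reflCLM_apply, reflCLM_apply, Bf_sub_left, Bf_smul_left]
  rw [show 2 / Bf d d * (Bf x d - 2 / Bf d d * Bf x d * Bf d d)
      = - (2 / Bf d d * Bf x d) from by field_simp; ring, neg_smul]
  abel

lemma reflCLM_im {d : (Fin n → ℂ) × ℂ} (hdim : d.2.im = 0) (x : (Fin n → ℂ) × ℂ) :
    (reflCLM d x).2.im = x.2.im := by
  rw [reflCLM_apply]
  show (x.2 - (2 / Bf d d * Bf x d) • d.2).im = x.2.im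
  rw [Complex.sub_im, Complex.smul_im, hdim]
  simp

lemma reflCLM_Bf {d : (Fin n → ℂ) × ℂ} (hd : d ≠ 0) (x : (Fin n → ℂ) × ℂ) :
    Bf (reflCLM d x) (reflCLM d x) = Bf x x := by
  have hD : Bf d d ≠ 0 := (Bf_self_pos hd).ne'
  rw [reflCLM_apply, Bf_sub_left, Bf_sub_right, Bf_sub_right, Bf_smul_left, Bf_smul_left,
    Bf_smul_right, Bf_smul_right, Bf_symm d x]
  field_simp
  ring


/-- The north pole. -/
def e0 (n : ℕ) : (Fin n → ℂ) × ℂ := ((0 : Fin n → ℂ), (1 : ℂ))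

lemma e0_mem : e0 n ∈ Mset n := mem_Mset_pole (Or.inl rfl)

lemma Bf_e0_self : Bf (e0 n) (e0 n) = 1 := (mem_Mset.1 e0_mem).2

section Refl

variable {p : (Fin n → ℂ) × ℂ}

lemma refl_d_ne (hne : p ≠ e0 n) : p - e0 n ≠ 0 := sub_ne_zero.2 hne

lemma refl_d_im (hp : p ∈ Mset n) : (p - e0 n).2.im = 0 := by
  show (p.2 - (e0 n).2).im = 0
  rw [Complex.sub_im, (mem_Mset.1 hp).1]
  show 0 - (1:ℂ).im = 0
  simp

lemma refl_to_pole (hp : p ∈ Mset n) (hne : p ≠ e0 n) : reflCLM (p - e0 n) p = e0 n := by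
  have h1 : Bf p (p - e0 n) = 1 - Bf p (e0 n) := by
    rw [Bf_sub_right, (mem_Mset.1 hp).2]
  have hD : Bf (p - e0 n) (p - e0 n) = 2 * (1 - Bf p (e0 n)) := by
    rw [Bf_sub_left, Bf_sub_right, Bf_sub_right, (mem_Mset.1 hp).2, Bf_e0_self,
      Bf_symm (e0 n) p]
    ring
  have hDne : Bf (p - e0 n) (p - e0 n) ≠ 0 := (Bf_self_pos (refl_d_ne hne)).ne'
  have hne1 : 1 - Bf p (e0 n) ≠ 0 := by
    intro h
    rw [hD, h] at hDne
    simp at hDne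
  rw [reflCLM_apply, h1, hD]
  rw [show 2 / (2 * (1 - Bf p (e0 n))) * (1 - Bf p (e0 n)) = 1 from by field_simp]
  rw [one_smul]
  abel

lemma refl_mem_M (hp : p ∈ Mset n) (hne : p ≠ e0 n) :
    ∀ x ∈ Mset n, reflCLM (p - e0 n) x ∈ Mset n := by
  intro x hx
  apply mem_Mset.2
  rw [reflCLM_im (refl_d_im hp), reflCLM_Bf (refl_d_ne hne)]
  exact mem_Mset.1 hx

lemma refl_mem_H (hp : p ∈ Mset n) (hne : p ≠ e0 n) :
    ∀ x ∈ Hset n, reflCLM (p - e0 n) x ∈ Hset n := by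
  intro x hx
  apply mem_Hset.2
  rw [reflCLM_im (refl_d_im hp), reflCLM_Bf (refl_d_ne hne)]
  exact mem_Hset.1 hx

end Refl

lemma e0_mem_Uch : e0 n ∈ Uch n := by
  constructor
  · show (∑ j : Fin n, ‖(0:ℂ)‖ ^ 2) < 1
    simp
  · show (0:ℝ) < (1:ℂ).re
    simp

/-- Chart at the pole for `M`. -/
lemma subAt_pole : AnalyticSubmanifoldAt (2 * n) (Mset n) (e0 n) :=
  ⟨Uch n, Vch n, isOpen_Uch, e0_mem_Uch, isOpen_Vch, φch, ψch,
    fun x hx => analyticAt_φch hx.1, fun y hy => analyticAt_ψch hy.1,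
    fun x hx => φch_maps hx, fun y hy => ψch_maps hy,
    Fsub n, finrank_Fsub, chartM_image⟩

/-- Every point of `M` is a manifold point. -/
lemma subAt_M {p : (Fin n → ℂ) × ℂ} (hp : p ∈ Mset n) :
    AnalyticSubmanifoldAt (2 * n) (Mset n) p := by
  by_cases hne : p = e0 n
  · rw [hne]
    exact subAt_pole
  · have hinv := reflCLM_invol (refl_d_ne hne)
    apply transport_subAt (A := reflCLM (p - e0 n)) (B := reflCLM (p - e0 n)) hinv hinv
      (image_eq_self_of_invol hinv (refl_mem_M hp hne))
    rw [refl_to_pole hp hne]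
    exact subAt_pole


lemma ℓch_ne : ∃ x ∈ Gsub n, ℓch n x ≠ 0 := by
  refine ⟨((0 : Fin n → ℂ), (-1 : ℂ)), ?_, ?_⟩
  · show ((-1 : ℂ)).im = 0
    simp
  · rw [ℓch_apply]
    show -((-1:ℂ)).re ≠ 0
    simp

/-- Boundary chart at the pole for `H`. -/
lemma subWithBdAt_pole : AnalyticSubmanifoldWithBoundaryAt (2 * n + 1) (Hset n) (Mset n) (e0 n) :=
  ⟨Uch n, Vch n, isOpen_Uch, e0_mem_Uch, isOpen_Vch, φch, ψch,
    fun x hx => analyticAt_φch hx.1, fun y hy => analyticAt_ψch hy.1,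
    fun x hx => φch_maps hx, fun y hy => ψch_maps hy,
    Gsub n, finrank_Gsub, ℓch n, ℓch_ne, chartH_image, chartMb_image⟩

lemma subWithBdAt_bd {p : (Fin n → ℂ) × ℂ} (hp : p ∈ Mset n) :
    AnalyticSubmanifoldWithBoundaryAt (2 * n + 1) (Hset n) (Mset n) p := by
  by_cases hne : p = e0 n
  · rw [hne]
    exact subWithBdAt_pole
  · have hinv := reflCLM_invol (refl_d_ne hne)
    apply transport_subWithBdAt (A := reflCLM (p - e0 n)) (B := reflCLM (p - e0 n)) hinv hinv
      (image_eq_self_of_invol hinv (refl_mem_H hp hne))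
      (image_eq_self_of_invol hinv (refl_mem_M hp hne))
    rw [refl_to_pole hp hne]
    exact subWithBdAt_pole

/-- Interior chart for `H`. -/
lemma subWithBdAt_int {p : (Fin n → ℂ) × ℂ} (him : p.2.im = 0)
    (hlt : (∑ j, ‖p.1 j‖ ^ 2) + p.2.re ^ 2 < 1) :
    AnalyticSubmanifoldWithBoundaryAt (2 * n + 1) (Hset n) (Mset n) p := by
  set e2 : (Fin n → ℂ) × ℂ := ((0 : Fin n → ℂ), (2 : ℂ)) with he2
  set U : Set ((Fin n → ℂ) × ℂ) :=
    {x | (∑ j, ‖x.1 j‖ ^ 2) + x.2.re ^ 2 < 1} with hU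
  set V : Set ((Fin n → ℂ) × ℂ) :=
    {y | (∑ j, ‖(y - e2).1 j‖ ^ 2) + (y - e2).2.re ^ 2 < 1} with hV
  have hUopen : IsOpen U := isOpen_lt continuous_QF continuous_const
  have hVopen : IsOpen V := isOpen_lt (continuous_QF.comp (continuous_sub_right e2))
    continuous_const
  have hsum_nonneg : ∀ x : (Fin n → ℂ) × ℂ, (0:ℝ) ≤ ∑ j, ‖x.1 j‖ ^ 2 :=
    fun x => Finset.sum_nonneg fun j _ => sq_nonneg _
  refine ⟨U, V, hUopen, hlt, hVopen, (· + e2), (· - e2),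
    fun x _ => (analyticAt_id.add analyticAt_const),
    fun y _ => (analyticAt_id.sub analyticAt_const), ?_, ?_,
    Gsub n, finrank_Gsub, Complex.reLm ∘ₗ LinearMap.snd ℝ (Fin n → ℂ) ℂ,
    ⟨((0 : Fin n → ℂ), (1 : ℂ)), by simp [mem_Gsub], by
      show ((1:ℂ)).re ≠ 0
      simp⟩, ?_, ?_⟩
  · intro x hx
    constructor
    · show x + e2 - e2 ∈ U
      simpa using hx
    · show x + e2 - e2 = x
      exact add_sub_cancel_right x e2
  · intro y hy
    exact ⟨hy, sub_add_cancel y e2⟩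
  · -- image of H ∩ U
    ext y
    constructor
    · rintro ⟨x, ⟨⟨hxim, _⟩, hxU⟩, rfl⟩
      have hxU' : (∑ j, ‖x.1 j‖ ^ 2) + x.2.re ^ 2 < 1 := hxU
      have hre : -1 ≤ x.2.re := by nlinarith [hsum_nonneg x]
      refine ⟨⟨?_, ?_⟩, ?_⟩
      · show x + e2 - e2 ∈ U
        simpa using hxU
      · show (x.2 + (2:ℂ)).im = 0
        simp [hxim]
      · show 0 ≤ (x.2 + (2:ℂ)).re
        simp only [Complex.add_re]
        norm_num
        linarith
    · rintro ⟨⟨hyV, hyG⟩, _⟩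
      have hyim : y.2.im = 0 := hyG
      refine ⟨y - e2, ⟨⟨?_, ?_⟩, hyV⟩, sub_add_cancel y e2⟩
      · show (y.2 - (2:ℂ)).im = 0
        rw [Complex.sub_im, hyim]
        norm_num
      · exact le_of_lt hyV
  · -- image of M ∩ U is empty
    have hMU : Mset n ∩ U = ∅ := by
      rw [Set.eq_empty_iff_forall_notMem]
      rintro x ⟨⟨_, hq⟩, hxU⟩
      exact absurd hq (ne_of_lt hxU)
    rw [hMU, Set.image_empty]
    symm
    rw [Set.eq_empty_iff_forall_notMem]
    rintro y ⟨⟨hyV, hyG⟩, hℓ⟩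
    have hyV' : (∑ j, ‖(y - e2).1 j‖ ^ 2) + (y - e2).2.re ^ 2 < 1 := hyV
    have h1 : ((y - e2).2.re) ^ 2 < 1 := by nlinarith [hsum_nonneg (y - e2)]
    have h2 : (y - e2).2.re = y.2.re - 2 := by
      show (y.2 - (2:ℂ)).re = y.2.re - 2
      simp
    rw [h2] at h1
    have hy0 : (Complex.reLm ∘ₗ LinearMap.snd ℝ (Fin n → ℂ) ℂ) y = y.2.re := rfl
    rw [hy0] at hℓ
    nlinarith


/-! ### Levi-flatness -/

lemma leviflat_Hint : IsLeviFlat (Hset n \ Mset n) := by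
  intro p hp
  obtain ⟨⟨him, hle⟩, hnM⟩ := hp
  have hlt : (∑ j, ‖p.1 j‖ ^ 2) + p.2.re ^ 2 < 1 := by
    rcases lt_or_eq_of_le hle with h | h
    · exact h
    · exact absurd ⟨him, h⟩ hnM
  set U : Set ((Fin n → ℂ) × ℂ) := {x | (∑ j, ‖x.1 j‖ ^ 2) + x.2.re ^ 2 < 1} with hUdef
  have hUopen : IsOpen U := isOpen_lt continuous_QF continuous_const
  set L : ((Fin n → ℂ) × ℂ) →L[ℝ] ℝ :=
    Complex.imCLM.comp (ContinuousLinearMap.snd ℝ (Fin n → ℂ) ℂ) with hL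
  refine ⟨U, hUopen, hlt, fun x => x.2.im, ?_, ?_, ?_, ?_⟩
  · exact L.contDiff.contDiffOn
  · intro x _
    have hfd : fderiv ℝ (fun x : (Fin n → ℂ) × ℂ => x.2.im) x = L := by
      exact L.fderiv
    rw [hfd]
    intro h
    have h1 : L ((0 : Fin n → ℂ), Complex.I) = 0 := by rw [h]; rfl
    have h2 : L ((0 : Fin n → ℂ), Complex.I) = 1 := by
      show (Complex.I).im = 1
      simp
    rw [h2] at h1
    exact one_ne_zero h1
  · ext x
    constructor
    · rintro ⟨⟨⟨hxim, _⟩, _⟩, hxU⟩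
      exact ⟨hxU, hxim⟩
    · rintro ⟨hxU, hxim⟩
      have hxU' : (∑ j, ‖x.1 j‖ ^ 2) + x.2.re ^ 2 < 1 := hxU
      exact ⟨⟨⟨hxim, hxU'.le⟩, fun hM => absurd hM.2 (ne_of_lt hxU')⟩, hxU⟩
  · -- Levi form vanishes: the defining function has constant differential
    intro x _ w _
    set Lc : ((Fin n → ℂ) × ℂ) →L[ℝ] ℂ :=
      Complex.ofRealCLM.comp L with hLc
    have hconst : (fun q : (Fin n → ℂ) × ℂ => wdir (fun y => ((y.2.im : ℝ) : ℂ)) w q)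
        = fun _ => (Lc w - Complex.I * Lc (Complex.I • w)) / 2 := by
      funext q
      unfold wdir
      have hfd : fderiv ℝ (fun y : (Fin n → ℂ) × ℂ => ((y.2.im : ℝ) : ℂ)) q = Lc :=
        Lc.fderiv
      rw [hfd]
    rw [show (fun q => wdir (fun y : (Fin n → ℂ) × ℂ => ((y.2.im : ℝ) : ℂ)) w q)
        = fun _ : (Fin n → ℂ) × ℂ => (Lc w - Complex.I * Lc (Complex.I • w)) / 2 from hconst]
    unfold wdirBar
    rw [fderiv_fun_const]
    simp

end ModelAux

/-- In `ℂ^n × ℂ`, the manifold `M = {Im w = 0, ‖z‖² + (Re w)² = 1}` is a compact real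
analytic submanifold of codimension 2 whose CR singular points are exactly `(0, ±1)`,
and `H = {Im w = 0, ‖z‖² + (Re w)² ≤ 1}` is a compact Levi-flat real analytic
hypersurface with boundary `M`. -/
theorem model_example {n : ℕ} (hn : 1 ≤ n)
    (M H : Set ((Fin n → ℂ) × ℂ))
    (hM : M = {p | p.2.im = 0 ∧ (∑ j, ‖p.1 j‖ ^ 2) + p.2.re ^ 2 = 1})
    (hH : H = {p | p.2.im = 0 ∧ (∑ j, ‖p.1 j‖ ^ 2) + p.2.re ^ 2 ≤ 1}) :
    IsCompact M ∧ IsAnalyticSubmanifold (2 * n) M ∧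
    crSingularSet M = {((0 : Fin n → ℂ), (1 : ℂ)), ((0 : Fin n → ℂ), (-1 : ℂ))} ∧
    IsCompact H ∧ IsAnalyticSubmanifoldWithBoundary (2 * n + 1) H M ∧
    IsLeviFlat (H \ M) := by
  rw [hM, hH]
  refine ⟨?_, ?_, ?_, ?_, ?_, ?_⟩
  · exact ModelAux.isCompact_Mset
  · exact fun p hp => ModelAux.subAt_M hp
  · exact ModelAux.crSingular_eq hn
  · exact ModelAux.isCompact_Hset
  · refine ⟨ModelAux.Mset_subset_Hset, ?_⟩
    intro p hp
    have hp' : p ∈ ModelAux.Hset n := hp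
    obtain ⟨him, hle⟩ := hp'
    rcases lt_or_eq_of_le hle with h | h
    · exact ModelAux.subWithBdAt_int him h
    · exact ModelAux.subWithBdAt_bd ⟨him, h⟩
  · exact ModelAux.leviflat_Hint

end Example

end
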